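/- For α > 0 and |k| > 1, the derivative of ω_α satisfies ω_α'(k) < α·|c₀|, where c₀² = tanh(α)/α. -/

import Mathlib

noncomputable def omegaA (α k : ℝ) : ℝ :=
  Real.sign k * Real.sqrt (α * k * Real.tanh (α * k))

lemma hasDerivAt_tanh' (x : ℝ) :
    HasDerivAt Real.tanh (1 / Real.cosh x ^ 2) x := by
  have h := (Real.hasDerivAt_sinh x).div (Real.hasDerivAt_cosh x) (Real.cosh_pos x).ne'
  have hfun : Real.tanh = fun y => Real.sinh y / Real.cosh y :=
    funext fun y => Real.tanh_eq_sinh_div_cosh y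
  have hval : (Real.cosh x * Real.cosh x - Real.sinh x * Real.sinh x) / Real.cosh x ^ 2
      = 1 / Real.cosh x ^ 2 := by
    rw [show Real.cosh x * Real.cosh x - Real.sinh x * Real.sinh x
        = Real.cosh x ^ 2 - Real.sinh x ^ 2 by ring, Real.cosh_sq_sub_sinh_sq]
  rw [hfun]
  rw [hval] at h
  exact h

lemma tanh_pos' {x : ℝ} (hx : 0 < x) : 0 < Real.tanh x := by
  rw [Real.tanh_eq_sinh_div_cosh]
  exact div_pos (Real.sinh_pos_iff.mpr hx) (Real.cosh_pos x)

lemma tanh_lt_mul (α : ℝ) (hα : 0 < α) (k : ℝ) (hk : 1 < k) :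
    Real.tanh (α * k) < k * Real.tanh α := by
  set g : ℝ → ℝ := fun t => t * Real.tanh α - Real.tanh (α * t) with hg
  have hderiv : ∀ t : ℝ, HasDerivAt g (Real.tanh α - α / Real.cosh (α * t) ^ 2) t := by
    intro t
    have h1 : HasDerivAt (fun x : ℝ => α * x) α t := by
      simpa using (hasDerivAt_id t).const_mul α
    have h2 : HasDerivAt (fun x : ℝ => Real.tanh (α * x))
        (1 / Real.cosh (α * t) ^ 2 * α) t := (hasDerivAt_tanh' (α * t)).comp t h1
    have h3 : HasDerivAt (fun x : ℝ => x * Real.tanh α) (Real.tanh α) t := by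
      simpa using (hasDerivAt_id t).mul_const (Real.tanh α)
    have := h3.sub h2
    rw [show Real.tanh α - α / Real.cosh (α * t) ^ 2 = Real.tanh α - 1 / Real.cosh (α * t) ^ 2 * α by ring]
    exact this
  have hmono : StrictMonoOn g (Set.Ici 1) := by
    apply strictMonoOn_of_deriv_pos (convex_Ici 1)
    · exact (Differentiable.continuous fun t => (hderiv t).differentiableAt).continuousOn
    · intro t ht
      rw [interior_Ici] at ht
      rw [(hderiv t).deriv]
      have htt : (1 : ℝ) < t := ht
      have hαt : α < α * t := by nlinarith
      have hcc : Real.cosh α < Real.cosh (α * t) := by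
        rw [Real.cosh_lt_cosh, abs_of_pos hα, abs_of_pos (by nlinarith : (0:ℝ) < α * t)]
        exact hαt
      have hc1 : 1 ≤ Real.cosh α := Real.one_le_cosh α
      have hcp : 0 < Real.cosh α := Real.cosh_pos α
      have hctp : 0 < Real.cosh (α * t) := Real.cosh_pos (α * t)
      have hs : α < Real.sinh α := Real.self_lt_sinh_iff.mpr hα
      have h1 : α / Real.cosh (α * t) ^ 2 < α / Real.cosh α ^ 2 := by
        apply div_lt_div_of_pos_left hα (by positivity)
        nlinarith
      have h2 : α / Real.cosh α ^ 2 < Real.tanh α := by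
        rw [Real.tanh_eq_sinh_div_cosh, div_lt_div_iff₀ (by positivity) hcp]
        have hsp : 0 < Real.sinh α := Real.sinh_pos_iff.mpr hα
        have h3 : Real.sinh α ≤ Real.sinh α * Real.cosh α :=
          le_mul_of_one_le_right hsp.le hc1
        nlinarith [mul_lt_mul_of_pos_right hs hcp]
      linarith
  have := hmono (Set.self_mem_Ici) (Set.mem_Ici.mpr hk.le) hk
  simp only [hg, mul_one, one_mul, sub_self] at this
  linarith [this]

lemma omegaA_deriv_lt_pos (α : ℝ) (hα : 0 < α) (k : ℝ) (hk : 1 < k) :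
    deriv (omegaA α) k < Real.sqrt (α * Real.tanh α) := by
  have hk0 : 0 < k := lt_trans one_pos hk
  have htα : 0 < Real.tanh α := tanh_pos' hα
  have hu : 0 < α * k := mul_pos hα hk0
  have hT : 0 < Real.tanh (α * k) := tanh_pos' hu
  have hF : 0 < α * k * Real.tanh (α * k) := mul_pos hu hT
  -- derivative computation
  have h1 : HasDerivAt (fun x : ℝ => α * x) α k := by
    simpa using (hasDerivAt_id k).const_mul α
  have h2 : HasDerivAt (fun x : ℝ => Real.tanh (α * x))
      (1 / Real.cosh (α * k) ^ 2 * α) k := (hasDerivAt_tanh' (α * k)).comp k h1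
  have hmul : HasDerivAt (fun x : ℝ => α * x * Real.tanh (α * x))
      (α * Real.tanh (α * k) + α * k * (1 / Real.cosh (α * k) ^ 2 * α)) k := h1.mul h2
  have hsq := hmul.sqrt hF.ne'
  have heq : omegaA α =ᶠ[nhds k] fun x => Real.sqrt (α * x * Real.tanh (α * x)) := by
    filter_upwards [eventually_gt_nhds hk0] with x hx
    unfold omegaA
    rw [Real.sign_of_pos hx, one_mul]
  rw [heq.deriv_eq, hsq.deriv]
  set D := α * Real.tanh (α * k) + α * k * (1 / Real.cosh (α * k) ^ 2 * α) with hD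
  set F := α * k * Real.tanh (α * k) with hFdef
  have hsF : 0 < Real.sqrt F := Real.sqrt_pos.mpr hF
  have hss : Real.sqrt F * Real.sqrt F = F := Real.mul_self_sqrt hF.le
  have hC : 0 < Real.cosh (α * k) := Real.cosh_pos _
  have hC1 : 1 ≤ Real.cosh (α * k) := Real.one_le_cosh _
  have hS : α * k < Real.sinh (α * k) := Real.self_lt_sinh_iff.mpr hu
  have hSpos : 0 < Real.sinh (α * k) := Real.sinh_pos_iff.mpr hu
  have stepA : D / (2 * Real.sqrt F) < Real.sqrt F / k := by
    rw [div_lt_div_iff₀ (by positivity) hk0]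
    have htanh : Real.tanh (α * k) = Real.sinh (α * k) / Real.cosh (α * k) :=
      Real.tanh_eq_sinh_div_cosh _
    have key : D * k < 2 * F := by
      have hC2 : (0:ℝ) < Real.cosh (α * k) ^ 2 := by positivity
      have e1 : D * k = (α * k * Real.sinh (α * k) * Real.cosh (α * k) + (α * k) ^ 2)
          / Real.cosh (α * k) ^ 2 := by
        rw [hD, htanh]; field_simp
      have e2 : 2 * F = (2 * (α * k) * Real.sinh (α * k) * Real.cosh (α * k))
          / Real.cosh (α * k) ^ 2 := by
        rw [hFdef, htanh]; field_simp
      rw [e1, e2, div_lt_div_iff₀ hC2 hC2]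
      have hSC : α * k < Real.sinh (α * k) * Real.cosh (α * k) :=
        lt_of_lt_of_le hS (le_mul_of_one_le_right hSpos.le hC1)
      nlinarith [mul_pos hu (sub_pos.mpr hSC), hC2]
    calc D * k < 2 * F := key
    _ = Real.sqrt F * (2 * Real.sqrt F) := by
        rw [show Real.sqrt F * (2 * Real.sqrt F) = 2 * (Real.sqrt F * Real.sqrt F) by ring, hss]
  have stepB : Real.sqrt F / k < Real.sqrt (α * Real.tanh α) := by
    rw [div_lt_iff₀ hk0]
    have h1 : Real.sqrt (α * Real.tanh α) * k = Real.sqrt (α * Real.tanh α * k ^ 2) := by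
      rw [Real.sqrt_mul (by nlinarith : (0:ℝ) ≤ α * Real.tanh α), Real.sqrt_sq hk0.le]
    rw [h1]
    apply Real.sqrt_lt_sqrt hF.le
    have := tanh_lt_mul α hα k hk
    rw [hFdef]; nlinarith
  linarith [stepA, stepB]

theorem omegaA_deriv_lt (α : ℝ) (hα : 0 < α) (k : ℝ) (hk : 1 < |k|)
    (c₀ : ℝ) (hc₀ : c₀ ^ 2 = Real.tanh α / α) :
    deriv (omegaA α) k < α * |c₀| := by
  have htα : 0 < Real.tanh α := tanh_pos' hα
  have hrhs : α * |c₀| = Real.sqrt (α * Real.tanh α) := by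
    have : |c₀| = Real.sqrt (Real.tanh α / α) := by
      rw [← Real.sqrt_sq_eq_abs, hc₀]
    rw [this, ← Real.sqrt_sq hα.le, ← Real.sqrt_mul (by positivity)]
    congr 1
    field_simp
    rw [Real.sq_sqrt (sq_nonneg α)]
    ring
  rw [hrhs]
  rcases lt_abs.mp hk with h | h
  · exact omegaA_deriv_lt_pos α hα k h
  · have hodd : ∀ x : ℝ, omegaA α (-x) = - omegaA α x := by
      intro x
      unfold omegaA
      rw [Real.sign_neg, mul_neg, Real.tanh_neg, neg_mul_neg]
      ring
    have hfun : omegaA α = fun x => - omegaA α (-x) := by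
      funext x
      rw [hodd x, neg_neg]
    have : deriv (omegaA α) k = deriv (omegaA α) (-k) := by
      conv_lhs => rw [hfun]
      rw [deriv.fun_neg, deriv_comp_neg, neg_neg]
    rw [this]
    exact omegaA_deriv_lt_pos α hα (-k) h
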